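/- (Robust aggregation, homogeneous case.) There are K = K_b + K_m clients (1 ≤ K_m < K_b), clients 1,…,K_b benign and clients K_b+1,…,K malicious; client k reports a characterization vector v^(k) ∈ ℝ^H and a positive integer sample size n_k. Fix an integer p ≥ 1 and suppose ‖v^(k) − v̄‖_p ≤ r for every benign k ∈ {1,…,K_b}, where v̄ ∈ ℝ^H and r ≥ 0. Let B be a set of K_b client indices whose maliciousness scores are the K_b smallest, and let N_B = Σ_{k∈B} n_k. Then ‖Σ_{k∈B} (n_k/N_B)·v^(k) − v̄‖_p ≤ (1 + (N_m/n_b)·(2/(1−τ)))·r, where τ = K_m/K_b, N_m = Σ_{k=K_b+1}^{K} n_k, and n_b = min_{k∈{1,…,K_b}} n_k. -/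

import Mathlib

open Finset

/-- The ℓ_p norm on `ℝ^H` for an integer `p ≥ 1`. -/
noncomputable def lpNorm {H : ℕ} (p : ℕ) (x : Fin H → ℝ) : ℝ :=
  (∑ i, |x i| ^ p) ^ ((1 : ℝ) / p)

/-- The maliciousness score of client `k`: `1/t` times the sum of the `t` smallest values
among the distances `d k k'` for `k' ≠ k` (the minimum over size-`t` subsets of the sum). -/
noncomputable def malScore {K : ℕ} (d : Fin K → Fin K → ℝ) (t : ℕ) (k : Fin K) : ℝ :=
  sInf {x : ℝ | ∃ S : Finset (Fin K),
    S ⊆ Finset.univ.erase k ∧ S.card = t ∧ x = ∑ k' ∈ S, d k k'} / t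

open scoped ENNReal


lemma lpNorm_eq_norm {H : ℕ} (p : ℕ) (hp : 1 ≤ p) (x : Fin H → ℝ) :
    haveI : Fact (1 ≤ (p : ℝ≥0∞)) := ⟨by exact_mod_cast hp⟩
    lpNorm p x = @norm (PiLp (p : ℝ≥0∞) fun _ : Fin H => ℝ) _ (WithLp.toLp (p : ℝ≥0∞) x) := by
  haveI : Fact (1 ≤ (p : ℝ≥0∞)) := ⟨by exact_mod_cast hp⟩
  rw [PiLp.norm_eq_sum]
  · simp [lpNorm, Real.rpow_natCast]
  · simp; positivity

lemma lpNorm_nonneg {H : ℕ} (p : ℕ) (x : Fin H → ℝ) : 0 ≤ lpNorm p x := by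
  unfold lpNorm; positivity

lemma lpNorm_sum_le {H p : ℕ} (hp : 1 ≤ p) {α : Type*} (S : Finset α) (g : α → Fin H → ℝ) :
    lpNorm p (fun i => ∑ k ∈ S, g k i) ≤ ∑ k ∈ S, lpNorm p (g k) := by
  haveI : Fact (1 ≤ (p : ℝ≥0∞)) := ⟨by exact_mod_cast hp⟩
  simp only [lpNorm_eq_norm p hp]
  have h1 : WithLp.toLp (p:ℝ≥0∞) (fun i => ∑ k ∈ S, g k i) = (∑ k ∈ S, WithLp.toLp (p:ℝ≥0∞) (g k) : PiLp (p:ℝ≥0∞) fun _ : Fin H => ℝ) := by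
    rw [← WithLp.toLp_sum]; congr 1
    funext i
    exact (Finset.sum_apply i S g).symm
  rw [h1]
  exact norm_sum_le (E := PiLp (p:ℝ≥0∞) fun _ : Fin H => ℝ) S (fun k => WithLp.toLp (p:ℝ≥0∞) (g k))

lemma lpNorm_smul {H p : ℕ} (hp : 1 ≤ p) (c : ℝ) (x : Fin H → ℝ) :
    lpNorm p (fun i => c * x i) = |c| * lpNorm p x := by
  haveI : Fact (1 ≤ (p : ℝ≥0∞)) := ⟨by exact_mod_cast hp⟩
  simp only [lpNorm_eq_norm p hp]
  have h1 : WithLp.toLp (p:ℝ≥0∞) (fun i => c * x i) = (c • WithLp.toLp (p:ℝ≥0∞) x : PiLp (p:ℝ≥0∞) fun _ : Fin H => ℝ) := rfl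
  rw [h1, norm_smul]
  simp [Real.norm_eq_abs]

lemma lpNorm_triangle {H p : ℕ} (hp : 1 ≤ p) (a b c : Fin H → ℝ) :
    lpNorm p (fun i => a i - c i) ≤
      lpNorm p (fun i => a i - b i) + lpNorm p (fun i => b i - c i) := by
  haveI : Fact (1 ≤ (p : ℝ≥0∞)) := ⟨by exact_mod_cast hp⟩
  simp only [lpNorm_eq_norm p hp]
  have h1 : WithLp.toLp (p:ℝ≥0∞) (fun i => a i - c i) = (WithLp.toLp (p:ℝ≥0∞) a - WithLp.toLp (p:ℝ≥0∞) c : PiLp (p:ℝ≥0∞) fun _ : Fin H => ℝ) := rfl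
  have h2 : WithLp.toLp (p:ℝ≥0∞) (fun i => a i - b i) = (WithLp.toLp (p:ℝ≥0∞) a - WithLp.toLp (p:ℝ≥0∞) b : PiLp (p:ℝ≥0∞) fun _ : Fin H => ℝ) := rfl
  have h3 : WithLp.toLp (p:ℝ≥0∞) (fun i => b i - c i) = (WithLp.toLp (p:ℝ≥0∞) b - WithLp.toLp (p:ℝ≥0∞) c : PiLp (p:ℝ≥0∞) fun _ : Fin H => ℝ) := rfl
  rw [h1, h2, h3]
  exact norm_sub_le_norm_sub_add_norm_sub (E := PiLp (p:ℝ≥0∞) fun _ : Fin H => ℝ) (WithLp.toLp (p:ℝ≥0∞) a) (WithLp.toLp (p:ℝ≥0∞) b) (WithLp.toLp (p:ℝ≥0∞) c)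

lemma lpNorm_sub_comm {H p : ℕ} (a b : Fin H → ℝ) :
    lpNorm p (fun i => a i - b i) = lpNorm p (fun i => b i - a i) := by
  unfold lpNorm
  congr 1
  apply Finset.sum_congr rfl
  intro i _
  rw [abs_sub_comm]



lemma card_filter_lt (N m : ℕ) (h : m ≤ N) :
    ((univ : Finset (Fin N)).filter (fun k : Fin N => (k:ℕ) < m)).card = m := by
  have : (univ : Finset (Fin N)).filter (fun k : Fin N => (k:ℕ) < m)
      = (univ : Finset (Fin m)).map (Fin.castLEEmb h) := by
    ext k
    simp [Fin.castLEEmb, Fin.ext_iff]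
    constructor
    · intro hk; exact ⟨⟨k, hk⟩, rfl⟩
    · rintro ⟨j, hj⟩; rw [← hj]; exact j.isLt
  rw [this, Finset.card_map, Finset.card_univ, Fintype.card_fin]

section
variable {H Kb Km : ℕ} {p : ℕ} {v : Fin (Kb + Km) → Fin H → ℝ} {vbar : Fin H → ℝ} {r : ℝ}

lemma malset_bddBelow (k : Fin (Kb + Km)) (t : ℕ) :
    BddBelow {x : ℝ | ∃ S : Finset (Fin (Kb + Km)),
      S ⊆ Finset.univ.erase k ∧ S.card = t ∧
      x = ∑ k' ∈ S, lpNorm p (fun i => v k i - v k' i)} := by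
  refine ⟨0, ?_⟩
  rintro x ⟨S, -, -, rfl⟩
  exact Finset.sum_nonneg fun k' _ => lpNorm_nonneg p _

lemma malset_nonempty (hKm1 : 1 ≤ Km) (k : Fin (Kb + Km)) :
    Set.Nonempty {x : ℝ | ∃ S : Finset (Fin (Kb + Km)),
      S ⊆ Finset.univ.erase k ∧ S.card = Kb - 1 ∧
      x = ∑ k' ∈ S, lpNorm p (fun i => v k i - v k' i)} := by
  have hc : Kb - 1 ≤ (Finset.univ.erase k).card := by
    rw [Finset.card_erase_of_mem (Finset.mem_univ k), Finset.card_univ, Fintype.card_fin]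
    omega
  obtain ⟨S, hS, hcard⟩ := Finset.exists_subset_card_eq hc
  exact ⟨_, S, hS, hcard, rfl⟩

lemma malScore_le_of_benign (hKm1 : 1 ≤ Km) (hKm : Km < Kb) (hp : 1 ≤ p) (hr : 0 ≤ r)
    (hben : ∀ k : Fin (Kb + Km), (k : ℕ) < Kb → lpNorm p (fun i => v k i - vbar i) ≤ r)
    (k' : Fin (Kb + Km)) (hk' : (k' : ℕ) < Kb) :
    malScore (fun k1 k2 => lpNorm p (fun i => v k1 i - v k2 i)) (Kb - 1) k' ≤ 2 * r := by
  have hKb2 : 2 ≤ Kb := by omega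
  set Bben := (univ : Finset (Fin (Kb + Km))).filter (fun k : Fin (Kb + Km) => (k:ℕ) < Kb)
    with hBben
  have hcardB : Bben.card = Kb := card_filter_lt _ _ (by omega)
  have hk'mem : k' ∈ Bben := by simp [hBben, hk']
  set S := Bben.erase k' with hSdef
  have hScard : S.card = Kb - 1 := by rw [hSdef, Finset.card_erase_of_mem hk'mem, hcardB]
  have hSsub : S ⊆ Finset.univ.erase k' :=
    Finset.erase_subset_erase _ (Finset.subset_univ _)
  have hsum : (∑ k'' ∈ S, lpNorm p (fun i => v k' i - v k'' i)) ≤ ((Kb - 1 : ℕ) : ℝ) * (2 * r) := by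
    calc (∑ k'' ∈ S, lpNorm p (fun i => v k' i - v k'' i))
        ≤ ∑ k'' ∈ S, 2 * r := by
          refine Finset.sum_le_sum fun k'' hk'' => ?_
          have hk''b : (k'' : ℕ) < Kb := by
            have := Finset.mem_of_mem_erase hk''
            simpa [hBben] using this
          have htri := lpNorm_triangle hp (v k') vbar (v k'')
          have h1 := hben k' hk'
          have h2 : lpNorm p (fun i => vbar i - v k'' i) ≤ r := by
            rw [lpNorm_sub_comm]; exact hben k'' hk''b
          linarith
      _ = (S.card : ℝ) * (2 * r) := by rw [Finset.sum_const, nsmul_eq_mul]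
      _ = ((Kb - 1 : ℕ) : ℝ) * (2 * r) := by rw [hScard]
  have hinf : sInf {x : ℝ | ∃ S : Finset (Fin (Kb + Km)),
      S ⊆ Finset.univ.erase k' ∧ S.card = Kb - 1 ∧
      x = ∑ k'' ∈ S, lpNorm p (fun i => v k' i - v k'' i)} ≤ ((Kb - 1 : ℕ) : ℝ) * (2 * r) := by
    refine le_trans (csInf_le (malset_bddBelow k' (Kb - 1)) ?_) hsum
    exact ⟨S, hSsub, hScard, rfl⟩
  have hpos : (0:ℝ) < ((Kb - 1 : ℕ) : ℝ) := by
    have : 0 < Kb - 1 := by omega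
    exact_mod_cast this
  unfold malScore
  rw [div_le_iff₀ hpos]
  exact le_of_le_of_eq hinf (mul_comm _ _)


lemma malScore_ge_of_malicious (hKm1 : 1 ≤ Km) (hKm : Km < Kb) (hp : 1 ≤ p) (hr : 0 ≤ r)
    (hben : ∀ k : Fin (Kb + Km), (k : ℕ) < Kb → lpNorm p (fun i => v k i - vbar i) ≤ r)
    (k : Fin (Kb + Km)) (hk : Kb ≤ (k : ℕ)) :
    ((Kb - Km : ℕ) : ℝ) * (lpNorm p (fun i => v k i - vbar i) - r) ≤
      ((Kb - 1 : ℕ) : ℝ) *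
        malScore (fun k1 k2 => lpNorm p (fun i => v k1 i - v k2 i)) (Kb - 1) k := by
  set D := lpNorm p (fun i => v k i - vbar i) with hD
  set M := max (D - r) 0 with hM
  have hMnn : (0:ℝ) ≤ M := le_max_right _ _
  have hlb : ∀ x ∈ {x : ℝ | ∃ S : Finset (Fin (Kb + Km)),
      S ⊆ Finset.univ.erase k ∧ S.card = Kb - 1 ∧
      x = ∑ k' ∈ S, lpNorm p (fun i => v k i - v k' i)},
      ((Kb - Km : ℕ) : ℝ) * M ≤ x := by
    rintro x ⟨S, hS, hcard, rfl⟩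
    set benS := S.filter (fun k'' : Fin (Kb+Km) => (k'':ℕ) < Kb) with hbenS
    have hmalcard : (S.filter (fun k'' : Fin (Kb+Km) => ¬ (k'':ℕ) < Kb)).card ≤ Km - 1 := by
      have hsub : S.filter (fun k'' : Fin (Kb+Km) => ¬ (k'':ℕ) < Kb) ⊆
          ((univ : Finset (Fin (Kb+Km))).filter
            (fun k'' : Fin (Kb+Km) => ¬ (k'':ℕ) < Kb)).erase k := by
        intro y hy
        rw [Finset.mem_filter] at hy
        rw [Finset.mem_erase, Finset.mem_filter]
        exact ⟨Finset.ne_of_mem_erase (hS hy.1), Finset.mem_univ y, hy.2⟩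
      have h1 : ((univ : Finset (Fin (Kb+Km))).filter
          (fun k'' : Fin (Kb+Km) => ¬ (k'':ℕ) < Kb)).card = Km := by
        have h2 := Finset.card_filter_add_card_filter_not
          (s := (univ : Finset (Fin (Kb+Km)))) (p := fun k'' : Fin (Kb+Km) => (k'':ℕ) < Kb)
        have h3 : ((univ : Finset (Fin (Kb+Km))).filter
          (fun k'' : Fin (Kb+Km) => (k'':ℕ) < Kb)).card = Kb := card_filter_lt _ _ (by omega)
        have h4 : (univ : Finset (Fin (Kb+Km))).card = Kb + Km := by
          rw [Finset.card_univ, Fintype.card_fin]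
        omega
      have hkmem : k ∈ (univ : Finset (Fin (Kb+Km))).filter
          (fun k'' : Fin (Kb+Km) => ¬ (k'':ℕ) < Kb) := by
        rw [Finset.mem_filter]; exact ⟨Finset.mem_univ k, by omega⟩
      calc (S.filter (fun k'' : Fin (Kb+Km) => ¬ (k'':ℕ) < Kb)).card
          ≤ _ := Finset.card_le_card hsub
        _ = Km - 1 := by rw [Finset.card_erase_of_mem hkmem, h1]
    have hbencard : Kb - Km ≤ benS.card := by
      have h2 := Finset.card_filter_add_card_filter_not
        (s := S) (p := fun k'' : Fin (Kb+Km) => (k'':ℕ) < Kb)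
      rw [hbenS]
      omega
    have hterm : ∀ k'' ∈ benS, M ≤ lpNorm p (fun i => v k i - v k'' i) := by
      intro k'' hk''
      rw [hbenS, Finset.mem_filter] at hk''
      have htri := lpNorm_triangle hp (v k) (v k'') vbar
      have h2 : lpNorm p (fun i => v k'' i - vbar i) ≤ r := hben k'' hk''.2
      rw [hM]
      apply max_le
      · rw [hD]; linarith
      · exact lpNorm_nonneg p _
    calc ((Kb - Km : ℕ) : ℝ) * M
        ≤ (benS.card : ℝ) * M := by
          apply mul_le_mul_of_nonneg_right _ hMnn
          exact_mod_cast hbencard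
      _ = ∑ _k'' ∈ benS, M := by rw [Finset.sum_const, nsmul_eq_mul]
      _ ≤ ∑ k'' ∈ benS, lpNorm p (fun i => v k i - v k'' i) := Finset.sum_le_sum hterm
      _ ≤ ∑ k' ∈ S, lpNorm p (fun i => v k i - v k' i) := by
          apply Finset.sum_le_sum_of_subset_of_nonneg (Finset.filter_subset _ _)
          intro x _ _; exact lpNorm_nonneg p _
  have hinf : ((Kb - Km : ℕ) : ℝ) * M ≤ sInf {x : ℝ | ∃ S : Finset (Fin (Kb + Km)),
      S ⊆ Finset.univ.erase k ∧ S.card = Kb - 1 ∧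
      x = ∑ k' ∈ S, lpNorm p (fun i => v k i - v k' i)} :=
    le_csInf (malset_nonempty hKm1 k) hlb
  have hstep : ((Kb - Km : ℕ) : ℝ) * (D - r) ≤ ((Kb - Km : ℕ) : ℝ) * M :=
    mul_le_mul_of_nonneg_left (le_max_left _ _) (by positivity)
  have hpos : ((Kb - 1 : ℕ) : ℝ) ≠ 0 := by
    have : 0 < Kb - 1 := by omega
    positivity
  unfold malScore
  rw [mul_div_cancel₀ _ hpos]
  exact hstep.trans hinf

end

/-- robust aggregation, homogeneous case: with `K = K_b + K_m` clients
(`1 ≤ K_m < K_b`; clients with index `< K_b` benign), each reporting a vector `v⁽ᵏ⁾` and a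
positive sample size `n_k`, if all benign vectors lie within ℓ_p distance `r` of `v̄` and
`B` is a set of `K_b` clients whose maliciousness scores are the `K_b` smallest, then
`‖∑_{k∈B} (n_k/N_B)·v⁽ᵏ⁾ - v̄‖_p ≤ (1 + (N_m/n_b)·(2/(1-τ)))·r`, where `τ = K_m/K_b`,
`N_m` is the total malicious sample size and `n_b` the minimal benign sample size. -/
theorem robust_aggregation_homogeneous (H Kb Km : ℕ) (hKm1 : 1 ≤ Km) (hKm : Km < Kb)
    (p : ℕ) (hp : 1 ≤ p)
    (v : Fin (Kb + Km) → Fin H → ℝ) (n : Fin (Kb + Km) → ℕ) (hn : ∀ k, 0 < n k)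
    (vbar : Fin H → ℝ) (r : ℝ) (hr : 0 ≤ r)
    (hben : ∀ k : Fin (Kb + Km), (k : ℕ) < Kb → lpNorm p (fun i => v k i - vbar i) ≤ r)
    (B : Finset (Fin (Kb + Km))) (hBcard : B.card = Kb)
    (hBmin : ∀ k ∈ B, ∀ k' ∉ B,
      malScore (fun k1 k2 => lpNorm p (fun i => v k1 i - v k2 i)) (Kb - 1) k ≤
        malScore (fun k1 k2 => lpNorm p (fun i => v k1 i - v k2 i)) (Kb - 1) k')
    (τ Nm nb : ℝ)
    (hτ : τ = (Km : ℝ) / (Kb : ℝ))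
    (hNm : Nm = ∑ k ∈ Finset.univ.filter (fun k : Fin (Kb + Km) => Kb ≤ (k : ℕ)), (n k : ℝ))
    (hnb : nb = ((sInf {a : ℕ | ∃ k : Fin (Kb + Km), (k : ℕ) < Kb ∧ n k = a} : ℕ) : ℝ)) :
    lpNorm p (fun i =>
        (∑ k ∈ B, ((n k : ℝ) / (∑ k' ∈ B, (n k' : ℝ))) * v k i) - vbar i) ≤
      (1 + (Nm / nb) * (2 / (1 - τ))) * r := by

  have hKb0 : 0 < Kb := by omega
  have hcKb : (0:ℝ) < (Kb:ℝ) := by exact_mod_cast hKb0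
  have hcKbKm : (0:ℝ) < (Kb:ℝ) - (Km:ℝ) := by
    have h : (Km:ℝ) < (Kb:ℝ) := by exact_mod_cast hKm
    linarith
  have hτ1 : 0 < 1 - τ := by
    have h : (Km:ℝ)/(Kb:ℝ) < 1 := (div_lt_one hcKb).mpr (by exact_mod_cast hKm)
    rw [hτ]; linarith
  have hc2τ : 2/(1-τ) = 2*(Kb:ℝ)/((Kb:ℝ)-(Km:ℝ)) := by
    rw [hτ]; field_simp
  set NB := ∑ k' ∈ B, (n k' : ℝ) with hNB
  have hBne : B.Nonempty := Finset.card_pos.mp (by omega)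
  have hNBpos : 0 < NB := by
    rw [hNB]
    exact Finset.sum_pos (fun k _ => by exact_mod_cast hn k) hBne
  have hNBne : NB ≠ 0 := ne_of_gt hNBpos
  have hsetne : {a : ℕ | ∃ k : Fin (Kb + Km), (k : ℕ) < Kb ∧ n k = a}.Nonempty :=
    ⟨n ⟨0, by omega⟩, ⟨0, by omega⟩, by simpa using hKb0, rfl⟩
  obtain ⟨k₀, hk₀b, hk₀n⟩ := Nat.sInf_mem hsetne
  have hnbpos : (0:ℝ) < nb := by
    rw [hnb]
    exact_mod_cast hk₀n ▸ hn k₀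
  have hnb_le : ∀ k : Fin (Kb+Km), (k:ℕ) < Kb → nb ≤ (n k : ℝ) := by
    intro k hk
    rw [hnb]
    have hm : n k ∈ {a : ℕ | ∃ k' : Fin (Kb + Km), (k' : ℕ) < Kb ∧ n k' = a} := ⟨k, hk, rfl⟩
    exact_mod_cast Nat.sInf_le hm
  -- a benign client inside B
  have hmalUcard : ((univ : Finset (Fin (Kb+Km))).filter
      (fun k : Fin (Kb+Km) => ¬ (k:ℕ) < Kb)).card = Km := by
    have h2 := Finset.card_filter_add_card_filter_not
      (s := (univ : Finset (Fin (Kb+Km)))) (p := fun k : Fin (Kb+Km) => (k:ℕ) < Kb)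
    have h3 : ((univ : Finset (Fin (Kb+Km))).filter
      (fun k : Fin (Kb+Km) => (k:ℕ) < Kb)).card = Kb := card_filter_lt _ _ (by omega)
    have h4 : (univ : Finset (Fin (Kb+Km))).card = Kb + Km := by
      rw [Finset.card_univ, Fintype.card_fin]
    omega
  have hmalBcard : (B.filter (fun k : Fin (Kb+Km) => ¬ (k:ℕ) < Kb)).card ≤ Km := by
    calc (B.filter (fun k : Fin (Kb+Km) => ¬ (k:ℕ) < Kb)).card
        ≤ _ := Finset.card_le_card (Finset.filter_subset_filter _ (Finset.subset_univ B))
      _ = Km := hmalUcard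
  obtain ⟨kb, hkbB, hkbben⟩ : ∃ k ∈ B, (k:ℕ) < Kb := by
    have h2 := Finset.card_filter_add_card_filter_not
      (s := B) (p := fun k : Fin (Kb+Km) => (k:ℕ) < Kb)
    have h5 : 0 < (B.filter (fun k : Fin (Kb+Km) => (k:ℕ) < Kb)).card := by omega
    obtain ⟨k, hk⟩ := Finset.card_pos.mp h5
    rw [Finset.mem_filter] at hk
    exact ⟨k, hk.1, hk.2⟩
  have hnbNB : nb ≤ NB := by
    refine le_trans (hnb_le kb hkbben) ?_
    rw [hNB]
    exact Finset.single_le_sum (f := fun k : Fin (Kb+Km) => (n k : ℝ))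
      (fun k _ => by positivity) hkbB
  have hcrnn : (0:ℝ) ≤ 2/(1-τ) * r := by positivity
  -- bound for malicious clients inside B
  have hmalbound : ∀ k ∈ B, ¬ (k:ℕ) < Kb →
      lpNorm p (fun i => v k i - vbar i) ≤ r + 2/(1-τ) * r := by
    intro k hkB hkmal
    have hben_card : ((univ : Finset (Fin (Kb+Km))).filter
        (fun j : Fin (Kb+Km) => (j:ℕ) < Kb)).card = Kb := card_filter_lt _ _ (by omega)
    obtain ⟨k', hk'b, hk'nB⟩ : ∃ k' : Fin (Kb+Km), (k':ℕ) < Kb ∧ k' ∉ B := by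
      by_contra hcon
      push_neg at hcon
      have hsub : ((univ : Finset (Fin (Kb+Km))).filter
          (fun j : Fin (Kb+Km) => (j:ℕ) < Kb)) ⊆ B := by
        intro j hj; rw [Finset.mem_filter] at hj; exact hcon j hj.2
      have heq : ((univ : Finset (Fin (Kb+Km))).filter
          (fun j : Fin (Kb+Km) => (j:ℕ) < Kb)) = B :=
        Finset.eq_of_subset_of_card_le hsub (by rw [hBcard, hben_card])
      rw [← heq, Finset.mem_filter] at hkB
      exact hkmal hkB.2
    have h1 := malScore_ge_of_malicious hKm1 hKm hp hr hben k (by omega)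
    have h2 := hBmin k hkB k' hk'nB
    have h3 := malScore_le_of_benign hKm1 hKm hp hr hben k' hk'b
    have hcast1 : ((Kb - Km : ℕ):ℝ) = (Kb:ℝ) - (Km:ℝ) := by
      rw [Nat.cast_sub hKm.le]
    have hcast2 : ((Kb - 1 : ℕ):ℝ) = (Kb:ℝ) - 1 := by
      rw [Nat.cast_sub (by omega)]; simp
    have hKb1nn : (0:ℝ) ≤ ((Kb - 1 : ℕ):ℝ) := by positivity
    have h4 : ((Kb:ℝ) - (Km:ℝ)) * (lpNorm p (fun i => v k i - vbar i) - r) ≤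
        ((Kb:ℝ) - 1) * (2*r) := by
      rw [← hcast1, ← hcast2]
      calc ((Kb - Km : ℕ):ℝ) * (lpNorm p (fun i => v k i - vbar i) - r)
          ≤ _ := h1
        _ ≤ ((Kb - 1 : ℕ):ℝ) *
            malScore (fun k1 k2 => lpNorm p (fun i => v k1 i - v k2 i)) (Kb - 1) k' :=
              mul_le_mul_of_nonneg_left h2 hKb1nn
        _ ≤ ((Kb - 1 : ℕ):ℝ) * (2*r) := mul_le_mul_of_nonneg_left h3 hKb1nn
    have h5 : ((Kb:ℝ) - (Km:ℝ)) * (lpNorm p (fun i => v k i - vbar i) - r) ≤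
        (Kb:ℝ) * (2*r) := by nlinarith
    have h6 : lpNorm p (fun i => v k i - vbar i) - r ≤ (Kb:ℝ) * (2*r) / ((Kb:ℝ)-(Km:ℝ)) := by
      rw [le_div_iff₀ hcKbKm]; linarith
    have h7 : (Kb:ℝ) * (2*r) / ((Kb:ℝ)-(Km:ℝ)) = 2*(Kb:ℝ)/((Kb:ℝ)-(Km:ℝ)) * r := by ring
    rw [hc2τ]
    linarith
  -- weights
  have hsumw : ∑ k ∈ B, (n k:ℝ)/NB = 1 := by
    rw [← Finset.sum_div, ← hNB, div_self hNBne]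
  have hfun : (fun i => (∑ k ∈ B, ((n k:ℝ)/NB) * v k i) - vbar i)
      = fun i => ∑ k ∈ B, ((n k:ℝ)/NB) * (v k i - vbar i) := by
    funext i
    simp only [mul_sub]
    rw [Finset.sum_sub_distrib, ← Finset.sum_mul, hsumw, one_mul]
  have hwnn : ∀ k : Fin (Kb+Km), (0:ℝ) ≤ (n k:ℝ)/NB := fun k => by positivity
  -- the two filtered sums
  have hab : (∑ k ∈ B.filter (fun k : Fin (Kb+Km) => (k:ℕ) < Kb), (n k:ℝ)/NB)
      + (∑ k ∈ B.filter (fun k : Fin (Kb+Km) => ¬ (k:ℕ) < Kb), (n k:ℝ)/NB) = 1 := by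
    rw [Finset.sum_filter_add_sum_filter_not]; exact hsumw
  have hann : 0 ≤ ∑ k ∈ B.filter (fun k : Fin (Kb+Km) => (k:ℕ) < Kb), (n k:ℝ)/NB :=
    Finset.sum_nonneg fun k _ => hwnn k
  have hbnn : 0 ≤ ∑ k ∈ B.filter (fun k : Fin (Kb+Km) => ¬ (k:ℕ) < Kb), (n k:ℝ)/NB :=
    Finset.sum_nonneg fun k _ => hwnn k
  have hNmnn : 0 ≤ Nm := by
    rw [hNm]; exact Finset.sum_nonneg fun k _ => by positivity
  have hble : (∑ k ∈ B.filter (fun k : Fin (Kb+Km) => ¬ (k:ℕ) < Kb), (n k:ℝ)/NB) ≤ Nm/nb := by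
    rw [← Finset.sum_div]
    apply div_le_div₀ hNmnn _ hnbpos hnbNB
    rw [hNm]
    apply Finset.sum_le_sum_of_subset_of_nonneg
    · intro k hk
      rw [Finset.mem_filter] at hk ⊢
      exact ⟨Finset.mem_univ k, by omega⟩
    · intro k _ _; positivity
  have hA : ∑ k ∈ B.filter (fun k : Fin (Kb+Km) => (k:ℕ) < Kb),
      ((n k:ℝ)/NB) * lpNorm p (fun i => v k i - vbar i)
      ≤ (∑ k ∈ B.filter (fun k : Fin (Kb+Km) => (k:ℕ) < Kb), (n k:ℝ)/NB) * r := by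
    rw [Finset.sum_mul]
    refine Finset.sum_le_sum fun k hk => ?_
    rw [Finset.mem_filter] at hk
    exact mul_le_mul_of_nonneg_left (hben k hk.2) (hwnn k)
  have hB' : ∑ k ∈ B.filter (fun k : Fin (Kb+Km) => ¬ (k:ℕ) < Kb),
      ((n k:ℝ)/NB) * lpNorm p (fun i => v k i - vbar i)
      ≤ (∑ k ∈ B.filter (fun k : Fin (Kb+Km) => ¬ (k:ℕ) < Kb), (n k:ℝ)/NB)
        * (r + 2/(1-τ) * r) := by
    rw [Finset.sum_mul]
    refine Finset.sum_le_sum fun k hk => ?_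
    rw [Finset.mem_filter] at hk
    exact mul_le_mul_of_nonneg_left (hmalbound k hk.1 hk.2) (hwnn k)
  have hkey : (∑ k ∈ B.filter (fun k : Fin (Kb+Km) => ¬ (k:ℕ) < Kb), (n k:ℝ)/NB)
      * (2/(1-τ) * r) ≤ (Nm/nb) * (2/(1-τ) * r) :=
    mul_le_mul_of_nonneg_right hble hcrnn
  calc lpNorm p (fun i => (∑ k ∈ B, ((n k:ℝ)/NB) * v k i) - vbar i)
      = lpNorm p (fun i => ∑ k ∈ B, ((n k:ℝ)/NB) * (v k i - vbar i)) := by rw [hfun]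
    _ ≤ ∑ k ∈ B, lpNorm p (fun i => ((n k:ℝ)/NB) * (v k i - vbar i)) :=
        lpNorm_sum_le hp B _
    _ = ∑ k ∈ B, ((n k:ℝ)/NB) * lpNorm p (fun i => v k i - vbar i) := by
        refine Finset.sum_congr rfl fun k _ => ?_
        rw [lpNorm_smul hp, abs_of_nonneg (hwnn k)]
    _ = (∑ k ∈ B.filter (fun k : Fin (Kb+Km) => (k:ℕ) < Kb),
          ((n k:ℝ)/NB) * lpNorm p (fun i => v k i - vbar i))
        + ∑ k ∈ B.filter (fun k : Fin (Kb+Km) => ¬ (k:ℕ) < Kb),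
          ((n k:ℝ)/NB) * lpNorm p (fun i => v k i - vbar i) :=
        (Finset.sum_filter_add_sum_filter_not B _ _).symm
    _ ≤ (1 + (Nm / nb) * (2 / (1 - τ))) * r := by nlinarith [hA, hB', hkey, hab, hann, hbnn]
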